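/- The number of reduced BFB sequences of length n, for n = 1,...,6, is 1, 1, 2, 7, 41, 397 respectively. -/

import Mathlib

/-- The reduced BFB sequences of length `n`: strictly positive integer sequences
`r 1, …, r n` with `r 1 = 1` and `r (k+1) ≤ s k` for `k < n`, encoded as
functions `ℕ → ℤ` vanishing outside `{1, …, n}`. -/
def ReducedBFBSeq (n : ℕ) : Set (ℕ → ℤ) :=
  {r | r 1 = 1 ∧ (∀ i, (i = 0 ∨ n < i) → r i = 0) ∧
    ∀ k, 1 ≤ k → k < n →
      1 ≤ r (k + 1) ∧ r (k + 1) ≤ ∑ i ∈ Finset.Icc 1 k, r i}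

set_option maxRecDepth 100000

/-- Extension of a list to a function `ℕ → ℤ` supported on `{1, …, length}`. -/
def extFn (l : List ℤ) : ℕ → ℤ := fun i => if 1 ≤ i then l.getD (i - 1) 0 else 0

/-- List version of the BFB condition. -/
def Good (n : ℕ) (l : List ℤ) : Prop :=
  l.length = n ∧ l.getD 0 0 = 1 ∧
    ∀ k, 1 ≤ k → k < n → 1 ≤ l.getD k 0 ∧ l.getD k 0 ≤ (l.take k).sum

def step (L : List (List ℤ)) : List (List ℤ) :=
  L.flatMap fun l => (List.range l.sum.toNat).map fun (j : ℕ) => l ++ [(j : ℤ) + 1]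

def seqs : ℕ → List (List ℤ)
  | 0 => []
  | 1 => [[1]]
  | (n+2) => step (seqs (n+1))

lemma sum_extFn (l : List ℤ) : ∀ k, k ≤ l.length →
    ∑ i ∈ Finset.Icc 1 k, extFn l i = (l.take k).sum
  | 0, _ => by simp
  | (k+1), h => by
    have hk : k < l.length := h
    rw [Finset.sum_Icc_succ_top (Nat.le_add_left 1 k), sum_extFn l k hk.le,
      List.sum_take_succ l k hk]
    congr 1
    show (if 1 ≤ k + 1 then l.getD (k + 1 - 1) 0 else 0) = l[k]
    rw [if_pos (Nat.le_add_left 1 k), Nat.add_sub_cancel]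
    exact List.getD_eq_getElem l 0 hk

lemma mem_seqs : ∀ (n : ℕ) (l : List ℤ), l ∈ seqs (n+1) ↔ Good (n+1) l
  | 0, l => by
    constructor
    · intro h
      have : l = [1] := by simpa [seqs] using h
      subst this
      refine ⟨rfl, rfl, fun k hk hk' => by omega⟩
    · rintro ⟨h1, h2, _⟩
      obtain ⟨a, rfl⟩ := List.length_eq_one_iff.mp h1
      simp only [List.getD] at h2
      simp [seqs]
      simpa using h2
  | (m+1), l => by
    have hiff : l ∈ seqs (m+2) ↔
        ∃ a, a ∈ seqs (m+1) ∧ ∃ j < a.sum.toNat, a ++ [(j:ℤ)+1] = l := by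
      rw [show seqs (m+2) = step (seqs (m+1)) from rfl, step, List.mem_flatMap]
      constructor
      · rintro ⟨a, ha, hmem⟩
        obtain ⟨j, hj, hgl⟩ := List.mem_map.mp hmem
        exact ⟨a, ha, j, List.mem_range.mp hj, hgl⟩
      · rintro ⟨a, ha, j, hj, hgl⟩
        exact ⟨a, ha, List.mem_map.mpr ⟨j, List.mem_range.mpr hj, hgl⟩⟩
    rw [hiff]
    constructor
    · rintro ⟨a, ha, j, hj, rfl⟩
      obtain ⟨hlen, hhead, hcond⟩ := (mem_seqs m a).mp ha
      have hjint : (j : ℤ) < a.sum := Int.lt_toNat.mp hj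
      refine ⟨by simp [hlen], ?_, ?_⟩
      · rw [List.getD_append _ _ _ _ (by omega)]; exact hhead
      · intro k hk hk'
        rcases Nat.lt_or_ge k (m+1) with hlt | hge
        · rw [List.getD_append _ _ _ _ (by omega),
            List.take_append_of_le_length (by omega)]
          exact hcond k hk hlt
        · have hkeq : k = m + 1 := by omega
          subst hkeq
          have hka : a.length ≤ m + 1 := by omega
          rw [List.getD_append_right _ _ _ _ (by omega)]
          have : (m + 1) - a.length = 0 := by omega
          rw [this]
          have htake : (a ++ [(j:ℤ)+1]).take (m+1) = a := by
            rw [← hlen]; exact List.take_left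
          rw [htake]
          constructor
          · rw [show ([(j:ℤ)+1].getD 0 0) = (j:ℤ)+1 from rfl]; omega
          · simpa using hjint
    · rintro ⟨hlen, hhead, hcond⟩
      have hne : l ≠ [] := by intro h; subst h; simp at hlen
      set a := l.dropLast with hadef
      set x := l.getLast hne with hxdef
      have hl : a ++ [x] = l := List.dropLast_append_getLast hne
      have halen : a.length = m + 1 := by
        rw [hadef, List.length_dropLast, hlen]; omega
      have hga : Good (m+1) a := by
        refine ⟨halen, ?_, ?_⟩
        · rw [← List.getD_append a [x] 0 0 (by omega), hl]; exact hhead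
        · intro k hk hk'
          have h1 := hcond k hk (by omega)
          rw [← hl, List.getD_append _ _ _ _ (by omega),
            List.take_append_of_le_length (by omega)] at h1
          exact h1
      have hx := hcond (m+1) (by omega) (by omega)
      have hxval : l.getD (m+1) 0 = x := by
        rw [← hl, List.getD_append_right _ _ _ _ (by omega)]
        have : (m + 1) - a.length = 0 := by omega
        rw [this]; rfl
      have htake : l.take (m+1) = a := by
        rw [← hl, ← halen]; exact List.take_left
      rw [hxval, htake] at hx
      refine ⟨a, (mem_seqs m a).mpr hga, (x - 1).toNat, ?_, ?_⟩
      · rw [Int.lt_toNat, Int.toNat_of_nonneg (by omega)]; omega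
      · rw [Int.toNat_of_nonneg (by omega)]
        have : x - 1 + 1 = x := by ring
        rw [this, hl]

lemma bfb_eq (n : ℕ) : ReducedBFBSeq (n+1) = extFn '' {l | l ∈ seqs (n+1)} := by
  ext r
  constructor
  · rintro ⟨h1, h0, hc⟩
    set l : List ℤ := (List.range (n+1)).map fun i => r (i+1) with hldef
    have hlen : l.length = n + 1 := by simp [hldef]
    have hget : ∀ i, i < n + 1 → l.getD i 0 = r (i+1) := by
      intro i hi
      rw [List.getD_eq_getElem l 0 (by omega)]
      simp [hldef]
    have hext : extFn l = r := by
      funext i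
      rcases Nat.eq_zero_or_pos i with rfl | hpos
      · simp [extFn]; exact (h0 0 (Or.inl rfl)).symm
      · rcases Nat.lt_or_ge i (n+2) with hlt | hge
        · have : extFn l i = l.getD (i-1) 0 := by unfold extFn; rw [if_pos (show 1 ≤ i by omega)]
          rw [this, hget (i-1) (by omega)]
          congr 1; omega
        · have : extFn l i = l.getD (i-1) 0 := by unfold extFn; rw [if_pos (show 1 ≤ i by omega)]
          rw [this, List.getD_eq_default l 0 (by omega)]
          exact (h0 i (Or.inr (by omega))).symm
    refine ⟨l, (mem_seqs n l).mpr ⟨hlen, ?_, ?_⟩, hext⟩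
    · rw [hget 0 (by omega)]; exact h1
    · intro k hk hk'
      have hsum : (l.take k).sum = ∑ i ∈ Finset.Icc 1 k, r i := by
        rw [← sum_extFn l k (by omega), hext]
      rw [hget k (by omega), hsum]
      exact hc k hk hk'
  · rintro ⟨l, hl, rfl⟩
    obtain ⟨hlen, hhead, hcond⟩ := (mem_seqs n l).mp hl
    refine ⟨?_, ?_, ?_⟩
    · simpa [extFn] using hhead
    · intro i hi
      rcases hi with rfl | hi
      · simp [extFn]
      · rcases Nat.eq_zero_or_pos i with rfl | hpos
        · simp [extFn]
        · have : extFn l i = l.getD (i-1) 0 := by unfold extFn; rw [if_pos (show 1 ≤ i by omega)]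
          rw [this, List.getD_eq_default l 0 (by omega)]
    · intro k hk hk'
      have h1 : extFn l (k+1) = l.getD k 0 := by simp [extFn]
      have h2 : ∑ i ∈ Finset.Icc 1 k, extFn l i = (l.take k).sum :=
        sum_extFn l k (by omega)
      rw [h1, h2]
      exact hcond k hk hk'

lemma extFn_injOn (n : ℕ) : Set.InjOn extFn {l | l ∈ seqs (n+1)} := by
  intro l₁ h₁ l₂ h₂ he
  have e1 := ((mem_seqs n l₁).mp h₁).1
  have e2 := ((mem_seqs n l₂).mp h₂).1
  refine List.ext_getElem (by rw [e1, e2]) ?_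
  intro i hi1 hi2
  have h3 := congrFun he (i+1)
  unfold extFn at h3
  simp only [show (1 ≤ i + 1) = True from eq_true (Nat.le_add_left 1 i), if_true,
    Nat.add_sub_cancel] at h3
  rw [← List.getD_eq_getElem l₁ 0 hi1, ← List.getD_eq_getElem l₂ 0 hi2]
  exact h3

lemma seqs_nodup : ∀ n, (seqs n).Nodup
  | 0 => List.nodup_nil
  | 1 => by simp [seqs]
  | (n+2) => by
    have ih := seqs_nodup (n+1)
    show (step (seqs (n+1))).Nodup
    rw [step]
    refine List.nodup_flatMap.mpr ⟨?_, ?_⟩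
    · intro a _
      refine List.nodup_range.map ?_
      intro j₁ j₂ h
      have h2 := List.append_cancel_left h
      simp only [List.cons.injEq, and_true] at h2
      omega
    · refine ih.imp ?_
      intro a b hab
      intro x hx hy
      simp only [List.mem_map, List.mem_range] at hx hy
      obtain ⟨j₁, _, rfl⟩ := hx
      obtain ⟨j₂, _, heq⟩ := hy
      exact hab (List.append_inj' heq.symm rfl).1

lemma key (n : ℕ) : (ReducedBFBSeq (n+1)).ncard = (seqs (n+1)).length := by
  rw [bfb_eq n, Set.ncard_image_of_injOn (extFn_injOn n)]
  have h : {l | l ∈ seqs (n+1)} = ((seqs (n+1)).toFinset : Set (List ℤ)) := by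
    ext; simp
  rw [h, Set.ncard_coe_finset, List.toFinset_card_of_nodup (seqs_nodup (n+1))]

/-- The number of reduced BFB sequences of length `n = 1, …, 6` is
`1, 1, 2, 7, 41, 397` respectively. -/
theorem reduced_bfb_counts :
    (ReducedBFBSeq 1).ncard = 1 ∧ (ReducedBFBSeq 2).ncard = 1 ∧
    (ReducedBFBSeq 3).ncard = 2 ∧ (ReducedBFBSeq 4).ncard = 7 ∧
    (ReducedBFBSeq 5).ncard = 41 ∧ (ReducedBFBSeq 6).ncard = 397 := by
  exact ⟨(key 0).trans (by decide), (key 1).trans (by decide),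
    (key 2).trans (by decide), (key 3).trans (by decide),
    (key 4).trans (by decide), (key 5).trans (by decide)⟩
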